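/- arXiv:2009.14377 — 3 statements merged into one kernel-verified Lean document; each statement's English description precedes it below -/
import Mathlib

section
/- Let k and n be positive integers with k > 2, and let A be a generalized Cartan matrix of type N_{k,n} (i.e., of type N_k with dimension n). Then A has a principal submatrix of type N_{k-1} whose dimension is n-1. -/
/-- An `n × n` integer matrix is a generalized Cartan matrix (GCM). -/
def IsGCM {n : ℕ} (A : Matrix (Fin n) (Fin n) ℤ) : Prop :=
  (∀ i, A i i = 2) ∧ (∀ i j, i ≠ j → A i j ≤ 0) ∧ (∀ i j, A i j = 0 → A j i = 0)

/-- The graph on the index set of `A`, with an edge between `i ≠ j` whenever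
`A i j ≠ 0` (stated symmetrically so as to be well-defined for all matrices;
for a GCM, `A i j ≠ 0 ↔ A j i ≠ 0`). -/
def gcmGraph {n : ℕ} (A : Matrix (Fin n) (Fin n) ℤ) : SimpleGraph (Fin n) where
  Adj i j := i ≠ j ∧ (A i j ≠ 0 ∨ A j i ≠ 0)
  symm := ⟨fun i j h => ⟨h.1.symm, h.2.symm⟩⟩
  loopless := ⟨fun i h => h.1 rfl⟩

/-- A matrix is indecomposable (its diagram is connected). -/
def IsIndecomposable {n : ℕ} (A : Matrix (Fin n) (Fin n) ℤ) : Prop :=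
  (gcmGraph A).Connected

/-- An indecomposable GCM is of finite type: there is `u > 0` with `A ⬝ u > 0`. -/
def IsFinType {n : ℕ} (A : Matrix (Fin n) (Fin n) ℤ) : Prop :=
  IsGCM A ∧ IsIndecomposable A ∧
    ∃ u : Fin n → ℚ, (∀ i, 0 < u i) ∧ (∀ i, 0 < ∑ j, (A i j : ℚ) * u j)

/-- An indecomposable GCM is of affine type: there is `u > 0` with `A ⬝ u = 0`. -/
def IsAffType {n : ℕ} (A : Matrix (Fin n) (Fin n) ℤ) : Prop :=
  IsGCM A ∧ IsIndecomposable A ∧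
    ∃ u : Fin n → ℚ, (∀ i, 0 < u i) ∧ (∀ i, ∑ j, (A i j : ℚ) * u j = 0)

/-- An indecomposable GCM is of indefinite type: there is `u > 0` with `A ⬝ u < 0`. -/
def IsIndefType {n : ℕ} (A : Matrix (Fin n) (Fin n) ℤ) : Prop :=
  IsGCM A ∧ IsIndecomposable A ∧
    ∃ u : Fin n → ℚ, (∀ i, 0 < u i) ∧ (∀ i, ∑ j, (A i j : ℚ) * u j < 0)

/-- `B` is a principal submatrix of `A`: the restriction of `A` to a subset of
its index set (encoded by a strictly monotone map `Fin m → Fin n`). -/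
def IsPrincipalSubmatrix {m n : ℕ} (B : Matrix (Fin m) (Fin m) ℤ)
    (A : Matrix (Fin n) (Fin n) ℤ) : Prop :=
  ∃ f : Fin m → Fin n, StrictMono f ∧ B = A.submatrix f f

/-- A proper principal submatrix: the corresponding subset is nonempty and proper. -/
def IsProperPrincipalSubmatrix {m n : ℕ} (B : Matrix (Fin m) (Fin m) ℤ)
    (A : Matrix (Fin n) (Fin n) ℤ) : Prop :=
  IsPrincipalSubmatrix B A ∧ 0 < m ∧ m < n

/-- A GCM is of hyperbolic type: indecomposable, neither finite nor affine,
and every proper connected principal submatrix is of finite or affine type. -/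
def IsHypType {n : ℕ} (A : Matrix (Fin n) (Fin n) ℤ) : Prop :=
  IsGCM A ∧ IsIndecomposable A ∧ ¬ IsFinType A ∧ ¬ IsAffType A ∧
    ∀ m, ∀ B : Matrix (Fin m) (Fin m) ℤ,
      IsProperPrincipalSubmatrix B A → IsIndecomposable B →
        (IsFinType B ∨ IsAffType B)

/-- `N₀` = finite type, `N₁` = affine type, `N₂` = hyperbolic type; for `k ≥ 3`,
a GCM is of type `N_k` if it has a proper principal submatrix of type `N_{k-1}`
and every proper connected principal submatrix is of type `N_m` for some `m < k`. -/
def IsNType : (k : ℕ) → {n : ℕ} → Matrix (Fin n) (Fin n) ℤ → Prop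
  | 0, _, A => IsFinType A
  | 1, _, A => IsAffType A
  | 2, _, A => IsHypType A
  | (k+3), _, A => IsGCM A ∧ IsIndecomposable A ∧
      (∃ m, ∃ B : Matrix (Fin m) (Fin m) ℤ,
        IsProperPrincipalSubmatrix B A ∧ IsNType (k+2) B) ∧
      (∀ m, ∀ B : Matrix (Fin m) (Fin m) ℤ,
        IsProperPrincipalSubmatrix B A → IsIndecomposable B →
          ∃ m', ∃ _ : m' < k + 3, IsNType m' B)
  termination_by k => k

lemma isNType_zero {n} (A : Matrix (Fin n) (Fin n) ℤ) : IsNType 0 A ↔ IsFinType A := by rw [IsNType]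
lemma isNType_one {n} (A : Matrix (Fin n) (Fin n) ℤ) : IsNType 1 A ↔ IsAffType A := by rw [IsNType]
lemma isNType_two {n} (A : Matrix (Fin n) (Fin n) ℤ) : IsNType 2 A ↔ IsHypType A := by rw [IsNType]
lemma isNType_add_three (k : ℕ) {n} (A : Matrix (Fin n) (Fin n) ℤ) :
    IsNType (k+3) A ↔ (IsGCM A ∧ IsIndecomposable A ∧
      (∃ m, ∃ B : Matrix (Fin m) (Fin m) ℤ,
        IsProperPrincipalSubmatrix B A ∧ IsNType (k+2) B) ∧
      (∀ m, ∀ B : Matrix (Fin m) (Fin m) ℤ,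
        IsProperPrincipalSubmatrix B A → IsIndecomposable B →
          ∃ m', ∃ _ : m' < k + 3, IsNType m' B)) := by rw [IsNType]
lemma gcm_sub {m n : ℕ} {A : Matrix (Fin n) (Fin n) ℤ} (hA : IsGCM A)
    {f : Fin m → Fin n} (hf : Function.Injective f) : IsGCM (A.submatrix f f) :=
  ⟨fun i => hA.1 (f i), fun i j hij => hA.2.1 (f i) (f j) (fun h => hij (hf h)),
   fun i j h => hA.2.2 (f i) (f j) h⟩

lemma ntype_gcm : ∀ {j m : ℕ} {B : Matrix (Fin m) (Fin m) ℤ}, IsNType j B → IsGCM B := by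
  intro j m B h
  match j with
  | 0 => rw [isNType_zero] at h; exact h.1
  | 1 => rw [isNType_one] at h; exact h.1
  | 2 => rw [isNType_two] at h; exact h.1
  | (k+3) => rw [isNType_add_three] at h; exact h.1

lemma ntype_conn : ∀ {j m : ℕ} {B : Matrix (Fin m) (Fin m) ℤ}, IsNType j B → IsIndecomposable B := by
  intro j m B h
  match j with
  | 0 => rw [isNType_zero] at h; exact h.2.1
  | 1 => rw [isNType_one] at h; exact h.2.1
  | 2 => rw [isNType_two] at h; exact h.2.1
  | (k+3) => rw [isNType_add_three] at h; exact h.2.1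

lemma cross_edge {V : Type*} {G : SimpleGraph V} {S : Set V} :
    ∀ {i j : V}, G.Walk i j → i ∈ S → j ∉ S → ∃ a ∈ S, ∃ b, b ∉ S ∧ G.Adj a b := by
  intro i j w
  induction w with
  | nil => intro h1 h2; exact absurd h1 h2
  | @cons u v w h p ih =>
    intro hi hj
    by_cases hv : v ∈ S
    · exact ih hv hj
    · exact ⟨u, hi, v, hv, h⟩
lemma not_fin_and_aff {m : ℕ} {B : Matrix (Fin m) (Fin m) ℤ}
    (hfin : IsFinType B) (haff : IsAffType B) : False := by
  obtain ⟨hG, hc, u, hu, hBu⟩ := hfin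
  obtain ⟨_, _, v, hv, hBv⟩ := haff
  have : Nonempty (Fin m) := hc.nonempty
  obtain ⟨i0, -, hmax⟩ := Finset.exists_max_image Finset.univ (fun i => v i / u i)
    Finset.univ_nonempty
  set c : ℚ := v i0 / u i0 with hc0
  have hcpos : 0 < c := div_pos (hv i0) (hu i0)
  have hkey : ∀ j, v j ≤ c * u j := by
    intro j
    have := hmax j (Finset.mem_univ j)
    exact (div_le_iff₀ (hu j)).mp this
  have hci0 : c * u i0 = v i0 := by rw [hc0, div_mul_cancel₀ _ (hu i0).ne']
  have hle : ∑ j, (B i0 j : ℚ) * (c * u j) ≤ ∑ j, (B i0 j : ℚ) * v j := by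
    apply Finset.sum_le_sum
    intro j _
    by_cases hj : j = i0
    · subst hj; rw [hci0]
    · have hB0 : (B i0 j : ℚ) ≤ 0 := by exact_mod_cast hG.2.1 i0 j (Ne.symm hj)
      exact mul_le_mul_of_nonpos_left (hkey j) hB0
  have heq : ∑ j, (B i0 j : ℚ) * (c * u j) = c * ∑ j, (B i0 j : ℚ) * u j := by
    rw [Finset.mul_sum]; apply Finset.sum_congr rfl; intro j _; ring
  have := hBu i0
  have := hBv i0
  nlinarith

lemma exists_pos_of_nonneg : ∀ (N : ℕ) {m : ℕ} (B : Matrix (Fin m) (Fin m) ℤ), IsGCM B →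
    (gcmGraph B).Connected → ∀ v : Fin m → ℚ, (∀ i, 0 < v i) →
    (∀ i, 0 ≤ ∑ j, (B i j : ℚ) * v j) → (∃ i, 0 < ∑ j, (B i j : ℚ) * v j) →
    (Finset.univ.filter (fun i => ∑ j, (B i j : ℚ) * v j = 0)).card ≤ N →
    ∃ u : Fin m → ℚ, (∀ i, 0 < u i) ∧ (∀ i, 0 < ∑ j, (B i j : ℚ) * u j) := by
  intro N
  induction N with
  | zero =>
    intro m B hB hc v hv h0 hne hcard
    refine ⟨v, hv, fun i => ?_⟩
    rcases lt_or_eq_of_le (h0 i) with h | h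
    · exact h
    · exfalso
      have hmem : i ∈ Finset.univ.filter (fun i => ∑ j, (B i j : ℚ) * v j = 0) :=
        Finset.mem_filter.mpr ⟨Finset.mem_univ i, h.symm⟩
      have := Finset.card_pos.mpr ⟨i, hmem⟩
      omega
  | succ N ih =>
    intro m B hB hc v hv h0 hne hcard
    by_cases hz : ∃ a, ∑ j, (B a j : ℚ) * v j = 0
    · obtain ⟨a, ha⟩ := hz
      obtain ⟨i0, hi0⟩ := hne
      set S : Set (Fin m) := {x | ∑ j, (B x j : ℚ) * v j = 0} with hS
      have hi0S : i0 ∉ S := by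
        intro h; rw [Set.mem_setOf_eq] at h; linarith
      obtain ⟨w⟩ := hc.preconnected a i0
      obtain ⟨a', ha'S, b, hbS, hadj⟩ := cross_edge w ha hi0S
      have ha'0 : ∑ j, (B a' j : ℚ) * v j = 0 := ha'S
      have hBab : B a' b ≠ 0 := by
        intro h
        rcases hadj.2 with h' | h'
        · exact h' h
        · exact h' (hB.2.2 a' b h)
      have hBablt : (B a' b : ℚ) < 0 := by
        have h1 : (B a' b : ℚ) ≤ 0 := by exact_mod_cast hB.2.1 a' b hadj.1
        have h2 : (B a' b : ℚ) ≠ 0 := by exact_mod_cast hBab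
        exact lt_of_le_of_ne h1 h2
      set sb : ℚ := ∑ j, (B b j : ℚ) * v j with hsb0
      have hsb : 0 < sb := by
        rcases lt_or_eq_of_le (h0 b) with h | h
        · exact h
        · exact absurd h.symm hbS
      set ε : ℚ := min (v b / 2) (sb / 4) with hε0
      have hε : 0 < ε := lt_min (by linarith [hv b]) (by linarith)
      have hε1 : ε ≤ v b / 2 := min_le_left _ _
      have hε2 : ε ≤ sb / 4 := min_le_right _ _
      set u : Fin m → ℚ := fun j => v j - if j = b then ε else 0 with hu0
      have hsum : ∀ l, ∑ j, (B l j : ℚ) * u j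
          = (∑ j, (B l j : ℚ) * v j) - (B l b : ℚ) * ε := by
        intro l
        have : ∀ j, (B l j : ℚ) * u j
            = (B l j : ℚ) * v j - (if j = b then (B l j : ℚ) * ε else 0) := by
          intro j
          by_cases hj : j = b <;> simp [hu0, hj, mul_sub]
        rw [Finset.sum_congr rfl (fun j _ => this j), Finset.sum_sub_distrib,
          Finset.sum_ite_eq' Finset.univ b]
        simp
      have hu : ∀ j, 0 < u j := by
        intro j
        by_cases hj : j = b
        · simp [hu0, hj]; linarith [hv b]
        · simp only [hu0, if_neg hj]; linarith [hv j]
      have hbpos : 0 < ∑ j, (B b j : ℚ) * u j := by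
        rw [hsum]
        have : (B b b : ℚ) = 2 := by exact_mod_cast hB.1 b
        rw [this]; linarith
      have h0' : ∀ l, 0 ≤ ∑ j, (B l j : ℚ) * u j := by
        intro l
        by_cases hl : l = b
        · subst hl; exact hbpos.le
        · rw [hsum]
          have hBlb : (B l b : ℚ) ≤ 0 := by exact_mod_cast hB.2.1 l b hl
          nlinarith [h0 l]
      have ha'pos : 0 < ∑ j, (B a' j : ℚ) * u j := by
        rw [hsum, ha'0]; nlinarith
      have hsubset : Finset.univ.filter (fun i => ∑ j, (B i j : ℚ) * u j = 0)
          ⊆ (Finset.univ.filter (fun i => ∑ j, (B i j : ℚ) * v j = 0)).erase a' := by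
        intro l hl
        rw [Finset.mem_filter] at hl
        have hl0 := hl.2
        have hlb : l ≠ b := by intro h; subst h; linarith
        have hla : l ≠ a' := by intro h; subst h; linarith
        refine Finset.mem_erase.mpr ⟨hla, Finset.mem_filter.mpr ⟨Finset.mem_univ l, ?_⟩⟩
        have hBlb : (B l b : ℚ) ≤ 0 := by exact_mod_cast hB.2.1 l b hlb
        rw [hsum] at hl0
        nlinarith [h0 l]
      have ha'mem : a' ∈ Finset.univ.filter (fun i => ∑ j, (B i j : ℚ) * v j = 0) :=
        Finset.mem_filter.mpr ⟨Finset.mem_univ a', ha'0⟩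
      have hcard' : (Finset.univ.filter (fun i => ∑ j, (B i j : ℚ) * u j = 0)).card ≤ N := by
        have h1 := Finset.card_le_card hsubset
        have h2 := Finset.card_erase_of_mem ha'mem
        have h3 := Finset.card_pos.mpr ⟨a', ha'mem⟩
        omega
      exact ih B hB hc u hu h0' ⟨a', ha'pos⟩ hcard'
    · push_neg at hz
      exact ⟨v, hv, fun i => lt_of_le_of_ne (h0 i) (fun h => hz i h.symm)⟩
lemma fin_submatrix {m n : ℕ} {A : Matrix (Fin n) (Fin n) ℤ} (hA : IsFinType A)
    {f : Fin m → Fin n} (hf : StrictMono f)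
    (hc : IsIndecomposable (A.submatrix f f)) : IsFinType (A.submatrix f f) := by
  obtain ⟨hG, _, u, hu, hAu⟩ := hA
  refine ⟨gcm_sub hG hf.injective, hc, fun i => u (f i), fun i => hu (f i), fun i => ?_⟩
  have himg : ∑ j : Fin m, ((A.submatrix f f) i j : ℚ) * u (f j)
      = ∑ y ∈ Finset.univ.image f, (A (f i) y : ℚ) * u y := by
    rw [Finset.sum_image (fun a _ b _ h => hf.injective h)]
    rfl
  rw [himg]
  have hsplit := Finset.sum_sdiff (f := fun y => (A (f i) y : ℚ) * u y)
    (Finset.subset_univ (Finset.univ.image f))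
  have hneg : ∑ y ∈ Finset.univ \ Finset.univ.image f, (A (f i) y : ℚ) * u y ≤ 0 := by
    apply Finset.sum_nonpos
    intro y hy
    have hyne : f i ≠ y := by
      intro h; rw [← h] at hy
      exact (Finset.mem_sdiff.mp hy).2 (Finset.mem_image_of_mem f (Finset.mem_univ i))
    have hA0 : (A (f i) y : ℚ) ≤ 0 := by exact_mod_cast hG.2.1 (f i) y hyne
    exact mul_nonpos_of_nonpos_of_nonneg hA0 (hu y).le
  have := hAu (f i)
  linarith

lemma aff_submatrix {m n : ℕ} {A : Matrix (Fin n) (Fin n) ℤ} (hA : IsAffType A)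
    {f : Fin m → Fin n} (hf : StrictMono f) (hm0 : 0 < m) (hmn : m < n)
    (hc : IsIndecomposable (A.submatrix f f)) : IsFinType (A.submatrix f f) := by
  obtain ⟨hG, hAc, u, hu, hAu⟩ := hA
  have hGs : IsGCM (A.submatrix f f) := gcm_sub hG hf.injective
  have hkey : ∀ i : Fin m, ∑ j : Fin m, ((A.submatrix f f) i j : ℚ) * u (f j)
      = ∑ y ∈ Finset.univ \ Finset.univ.image f, (-(A (f i) y : ℚ)) * u y := by
    intro i
    have himg : ∑ j : Fin m, ((A.submatrix f f) i j : ℚ) * u (f j)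
        = ∑ y ∈ Finset.univ.image f, (A (f i) y : ℚ) * u y := by
      rw [Finset.sum_image (fun a _ b _ h => hf.injective h)]
      rfl
    have hsplit := Finset.sum_sdiff (f := fun y => (A (f i) y : ℚ) * u y)
      (Finset.subset_univ (Finset.univ.image f))
    have htot := hAu (f i)
    rw [himg]
    have : ∑ y ∈ Finset.univ \ Finset.univ.image f, (-(A (f i) y : ℚ)) * u y
        = - ∑ y ∈ Finset.univ \ Finset.univ.image f, (A (f i) y : ℚ) * u y := by
      rw [← Finset.sum_neg_distrib]
      apply Finset.sum_congr rfl; intro y _; ring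
    rw [this]; linarith
  have hterm : ∀ i : Fin m, ∀ y ∈ Finset.univ \ Finset.univ.image f,
      0 ≤ (-(A (f i) y : ℚ)) * u y := by
    intro i y hy
    have hyne : f i ≠ y := by
      intro h; rw [← h] at hy
      exact (Finset.mem_sdiff.mp hy).2 (Finset.mem_image_of_mem f (Finset.mem_univ i))
    have hA0 : (A (f i) y : ℚ) ≤ 0 := by exact_mod_cast hG.2.1 (f i) y hyne
    exact mul_nonneg (by linarith) (hu y).le
  have h0 : ∀ i : Fin m, 0 ≤ ∑ j : Fin m, ((A.submatrix f f) i j : ℚ) * u (f j) := by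
    intro i; rw [hkey i]; exact Finset.sum_nonneg (hterm i)
  -- a cross edge
  have hcard : (Finset.univ.image f).card = m := by
    rw [Finset.card_image_of_injective _ hf.injective, Finset.card_univ, Fintype.card_fin]
  obtain ⟨j₁, hj₁⟩ : ∃ y, y ∉ Finset.univ.image f := by
    by_contra hcon
    push_neg at hcon
    have : (Finset.univ : Finset (Fin n)) ⊆ Finset.univ.image f :=
      fun y _ => hcon y
    have := Finset.card_le_card this
    rw [hcard, Finset.card_univ, Fintype.card_fin] at this
    omega
  obtain ⟨w⟩ := hAc.preconnected (f ⟨0, hm0⟩) j₁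
  obtain ⟨a, haS, b, hbS, hadj⟩ := cross_edge (S := {x | x ∈ Finset.univ.image f}) w
    (Finset.mem_image_of_mem f (Finset.mem_univ _)) hj₁
  obtain ⟨a₀, -, ha₀⟩ := Finset.mem_image.mp (show a ∈ Finset.univ.image f from haS)
  have hAab : A a b ≠ 0 := by
    intro h
    rcases hadj.2 with h' | h'
    · exact h' h
    · exact h' (hG.2.2 a b h)
  have hAablt : (A a b : ℚ) < 0 := by
    have h1 : (A a b : ℚ) ≤ 0 := by exact_mod_cast hG.2.1 a b hadj.1
    have h2 : (A a b : ℚ) ≠ 0 := by exact_mod_cast hAab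
    exact lt_of_le_of_ne h1 h2
  have hne : 0 < ∑ j : Fin m, ((A.submatrix f f) a₀ j : ℚ) * u (f j) := by
    rw [hkey a₀]
    have hterm' := hterm a₀
    rw [ha₀] at hterm' ⊢
    exact Finset.sum_pos' hterm' ⟨b, Finset.mem_sdiff.mpr ⟨Finset.mem_univ b, hbS⟩,
        mul_pos (by linarith) (hu b)⟩
  obtain ⟨u', hu', hAu'⟩ := exists_pos_of_nonneg m (A.submatrix f f) hGs hc
    (fun j => u (f j)) (fun j => hu (f j)) h0 ⟨a₀, hne⟩
    (by
      calc (Finset.univ.filter _).card ≤ (Finset.univ : Finset (Fin m)).card :=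
            Finset.card_le_card (Finset.filter_subset _ _)
      _ = m := by rw [Finset.card_univ, Fintype.card_fin])
  exact ⟨hGs, hc, u', hu', hAu'⟩
lemma ntype_not_fin_aff : ∀ j, 2 ≤ j → ∀ {m : ℕ} {B : Matrix (Fin m) (Fin m) ℤ},
    IsNType j B → ¬IsFinType B ∧ ¬IsAffType B := by
  intro j
  induction j using Nat.strong_induction_on with
  | _ j ih =>
    intro hj m B hB
    match j, hj with
    | 2, _ =>
      rw [isNType_two] at hB
      exact ⟨hB.2.2.1, hB.2.2.2.1⟩
    | (k+3), _ =>
      rw [isNType_add_three] at hB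
      obtain ⟨hG, hc, ⟨d, D, hDsub, hDN⟩, -⟩ := hB
      obtain ⟨⟨f, hf, rfl⟩, hd0, hdlt⟩ := hDsub
      have hDc : IsIndecomposable (B.submatrix f f) := ntype_conn hDN
      have hD := ih (k+2) (by omega) (by omega) hDN
      constructor
      · intro hfin; exact hD.1 (fin_submatrix hfin hf hDc)
      · intro haff; exact hD.1 (aff_submatrix haff hf hd0 hdlt hDc)

lemma ntype_unique : ∀ a b : ℕ, a < b → ∀ {m : ℕ} {B : Matrix (Fin m) (Fin m) ℤ},
    IsNType a B → IsNType b B → False := by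
  intro a
  induction a using Nat.strong_induction_on with
  | _ a ih =>
    intro b hab m B ha hb
    match a, ih with
    | 0, _ =>
      rw [isNType_zero] at ha
      match b, hab with
      | 1, _ =>
        rw [isNType_one] at hb
        exact not_fin_and_aff ha hb
      | (b+2), _ =>
        exact (ntype_not_fin_aff (b+2) (by omega) hb).1 ha
    | 1, _ =>
      rw [isNType_one] at ha
      exact (ntype_not_fin_aff b (by omega) hb).2 ha
    | 2, _ =>
      rw [isNType_two] at ha
      obtain ⟨b', rfl⟩ : ∃ b', b = b' + 3 := ⟨b - 3, by omega⟩
      rw [isNType_add_three] at hb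
      obtain ⟨-, -, ⟨d, D, hDsub, hDN⟩, -⟩ := hb
      rcases ha.2.2.2.2 d D hDsub (ntype_conn hDN) with hfin | haff
      · exact (ntype_not_fin_aff (b'+2) (by omega) hDN).1 hfin
      · exact (ntype_not_fin_aff (b'+2) (by omega) hDN).2 haff
    | (a'+3), ih =>
      obtain ⟨b', rfl⟩ : ∃ b', b = b' + 3 := ⟨b - 3, by omega⟩
      rw [isNType_add_three] at ha hb
      obtain ⟨-, -, ⟨d, D, hDsub, hDN⟩, -⟩ := hb
      obtain ⟨m'', hm'', hD''⟩ := ha.2.2.2 d D hDsub (ntype_conn hDN)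
      exact ih m'' (by omega) (b'+2) (by omega) hD'' hDN

lemma ntype_lt_of_sub {kc : ℕ} (h2 : 2 ≤ kc) (m' : ℕ) {e d : ℕ}
    {C' : Matrix (Fin e) (Fin e) ℤ} {C : Matrix (Fin d) (Fin d) ℤ}
    (hC' : IsNType m' C') (hsub : IsProperPrincipalSubmatrix C C')
    (hc : IsIndecomposable C) (hC : IsNType kc C) : kc < m' := by
  match m' with
  | 0 =>
    rw [isNType_zero] at hC'
    obtain ⟨⟨f, hf, rfl⟩, -, -⟩ := hsub
    exact absurd (fin_submatrix hC' hf hc) (ntype_not_fin_aff kc h2 hC).1 |> False.elim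
  | 1 =>
    rw [isNType_one] at hC'
    obtain ⟨⟨f, hf, rfl⟩, hd0, hdlt⟩ := hsub
    exact absurd (aff_submatrix hC' hf hd0 hdlt hc) (ntype_not_fin_aff kc h2 hC).1 |> False.elim
  | 2 =>
    rw [isNType_two] at hC'
    rcases hC'.2.2.2.2 d C hsub hc with hfin | haff
    · exact absurd hfin (ntype_not_fin_aff kc h2 hC).1 |> False.elim
    · exact absurd haff (ntype_not_fin_aff kc h2 hC).2 |> False.elim
  | (m'+3) =>
    by_contra hle
    push_neg at hle
    rw [isNType_add_three] at hC'
    obtain ⟨m'', hm'', hm''C⟩ := hC'.2.2.2 d C hsub hc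
    exact ntype_unique m'' kc (by omega) hm''C hC
lemma no_small_sub {k' n m : ℕ} {A : Matrix (Fin n) (Fin n) ℤ}
    (hG : IsGCM A) (hConn : IsIndecomposable A)
    (hall : ∀ m, ∀ B : Matrix (Fin m) (Fin m) ℤ,
        IsProperPrincipalSubmatrix B A → IsIndecomposable B →
          ∃ m', ∃ _ : m' < k' + 3, IsNType m' B)
    {B : Matrix (Fin m) (Fin m) ℤ} (hsub : IsProperPrincipalSubmatrix B A)
    (hBN : IsNType (k'+2) B) (hd : m + 1 < n) : False := by
  obtain ⟨⟨f, hf, rfl⟩, hm0, hmn⟩ := hsub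
  set s : Finset (Fin n) := Finset.univ.image f with hs
  have hcards : s.card = m := by
    rw [hs, Finset.card_image_of_injective _ hf.injective, Finset.card_univ, Fintype.card_fin]
  obtain ⟨j₁, hj₁⟩ : ∃ y, y ∉ s := by
    by_contra hcon
    push_neg at hcon
    have hsub' : (Finset.univ : Finset (Fin n)) ⊆ s := fun y _ => hcon y
    have := Finset.card_le_card hsub'
    rw [hcards, Finset.card_univ, Fintype.card_fin] at this
    omega
  obtain ⟨w⟩ := hConn.preconnected (f ⟨0, hm0⟩) j₁
  obtain ⟨a, haS, b, hbS, hadj⟩ := cross_edge (S := {x | x ∈ s}) w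
    (Finset.mem_image_of_mem f (Finset.mem_univ _)) hj₁
  have haS' : a ∈ s := haS
  have hbS' : b ∉ s := hbS
  obtain ⟨a₀, -, ha₀⟩ := Finset.mem_image.mp haS'
  set s' : Finset (Fin n) := insert b s with hs'
  have hcard' : s'.card = m + 1 := by
    rw [hs', Finset.card_insert_of_notMem hbS', hcards]
  set g := s'.orderEmbOfFin hcard' with hg
  have hrange : ∀ y : Fin n, y ∈ s' → ∃ x : Fin (m+1), g x = y := by
    intro y hy
    have : y ∈ Set.range ⇑g := by
      rw [hg, Finset.range_orderEmbOfFin]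
      exact hy
    exact this
  have hfm : ∀ i : Fin m, f i ∈ s' := fun i =>
    Finset.mem_insert_of_mem (Finset.mem_image_of_mem f (Finset.mem_univ i))
  set h : Fin m → Fin (m+1) := fun i => (hrange (f i) (hfm i)).choose with hh
  have hgh : ∀ i, g (h i) = f i := fun i => (hrange (f i) (hfm i)).choose_spec
  obtain ⟨bIdx, hbIdx⟩ := hrange b (Finset.mem_insert_self b s)
  have hmono : StrictMono h := by
    intro i j hij
    apply (g.strictMono.lt_iff_lt).mp
    rw [hgh, hgh]
    exact hf hij
  have heq : (A.submatrix ⇑g ⇑g).submatrix h h = A.submatrix f f := by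
    ext i j
    simp [Matrix.submatrix_apply, hgh]
  have hsubC' : IsProperPrincipalSubmatrix (A.submatrix f f) (A.submatrix ⇑g ⇑g) :=
    ⟨⟨h, hmono, heq.symm⟩, hm0, Nat.lt_succ_self m⟩
  have hBc : IsIndecomposable (A.submatrix f f) := ntype_conn hBN
  -- graph hom
  have hmap : ∀ {i j : Fin m}, (gcmGraph (A.submatrix f f)).Adj i j →
      (gcmGraph (A.submatrix ⇑g ⇑g)).Adj (h i) (h j) := by
    intro i j hij
    refine ⟨fun hcc => hij.1 (hmono.injective hcc), ?_⟩
    have e1 : (A.submatrix ⇑g ⇑g) (h i) (h j) = (A.submatrix f f) i j := by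
      simp [Matrix.submatrix_apply, hgh]
    have e2 : (A.submatrix ⇑g ⇑g) (h j) (h i) = (A.submatrix f f) j i := by
      simp [Matrix.submatrix_apply, hgh]
    rw [e1, e2]
    exact hij.2
  let φ : gcmGraph (A.submatrix f f) →g gcmGraph (A.submatrix ⇑g ⇑g) :=
    ⟨h, hmap⟩
  have habIdx : h a₀ ≠ bIdx := by
    intro hcc
    have : g (h a₀) = g bIdx := by rw [hcc]
    rw [hgh, hbIdx, ha₀] at this
    exact hbS' (this ▸ haS')
  have hadjC' : (gcmGraph (A.submatrix ⇑g ⇑g)).Adj (h a₀) bIdx := by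
    refine ⟨habIdx, ?_⟩
    have e1 : (A.submatrix ⇑g ⇑g) (h a₀) bIdx = A a b := by
      simp [Matrix.submatrix_apply, hgh, hbIdx, ha₀]
    have e2 : (A.submatrix ⇑g ⇑g) bIdx (h a₀) = A b a := by
      simp [Matrix.submatrix_apply, hgh, hbIdx, ha₀]
    rw [e1, e2]
    exact hadj.2
  have hconn' : IsIndecomposable (A.submatrix ⇑g ⇑g) := by
    have hreach : ∀ x : Fin (m+1), (gcmGraph (A.submatrix ⇑g ⇑g)).Reachable x bIdx := by
      intro x
      by_cases hx : x = bIdx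
      · exact hx ▸ SimpleGraph.Reachable.refl x
      · have hgx : g x ∈ s := by
          have hx' : g x ∈ s' := by
            have : g x ∈ Set.range ⇑g := ⟨x, rfl⟩
            rw [hg, Finset.range_orderEmbOfFin] at this
            exact this
          rcases Finset.mem_insert.mp hx' with hcase | hcase
          · exact absurd (g.injective (hcase.trans hbIdx.symm)) hx |> False.elim
          · exact hcase
        obtain ⟨x₀, -, hx₀⟩ := Finset.mem_image.mp hgx
        have hx0 : h x₀ = x := by
          apply g.injective
          rw [hgh, hx₀]
        have hr1 : (gcmGraph (A.submatrix f f)).Reachable x₀ a₀ := hBc.preconnected x₀ a₀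
        have hr2 : (gcmGraph (A.submatrix ⇑g ⇑g)).Reachable (h x₀) (h a₀) := hr1.map φ
        rw [hx0] at hr2
        exact hr2.trans hadjC'.reachable
    exact ⟨fun x y => (hreach x).trans (hreach y).symm⟩
  obtain ⟨m', hm', hC'N⟩ := hall (m+1) (A.submatrix ⇑g ⇑g)
    ⟨⟨⇑g, g.strictMono, rfl⟩, by omega, hd⟩ hconn'
  have := ntype_lt_of_sub (show 2 ≤ k'+2 by omega) m' hC'N hsubC' hBc hBN
  omega

/-- Theorem 3.1 of the paper: a GCM of type `N_{k,n}` with `k > 2`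
has a principal submatrix of type `N_{k-1}` of dimension `n - 1`. -/
theorem exists_principal_submatrix_of_isNType {k n : ℕ} (hk : 2 < k) (hn : 0 < n)
    {A : Matrix (Fin n) (Fin n) ℤ} (hA : IsGCM A) (hN : IsNType k A) :
    ∃ B : Matrix (Fin (n - 1)) (Fin (n - 1)) ℤ,
      IsProperPrincipalSubmatrix B A ∧ IsNType (k - 1) B := by
  obtain ⟨k', rfl⟩ : ∃ k', k = k' + 3 := ⟨k - 3, by omega⟩
  rw [isNType_add_three] at hN
  obtain ⟨hG, hConn, ⟨m, B, hsub, hBN⟩, hall⟩ := hN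
  have hm : m = n - 1 := by
    by_contra hne
    have h1 := hsub.2.1
    have h2 := hsub.2.2
    exact no_small_sub hG hConn hall hsub hBN (by omega)
  subst hm
  refine ⟨B, hsub, ?_⟩
  have he : k' + 3 - 1 = k' + 2 := by omega
  rw [he]
  exact hBN
end

section
/- Let A = (a_ij) be an ℓ×ℓ generalized Cartan matrix. Then A is symmetrizable if and only if for every k ≤ ℓ and every sequence of indices i_1,…,i_k ∈ {1,…,ℓ} with i_s ≠ i_{s+1} for all s taken modulo k, one has a_{i_1 i_2} a_{i_2 i_3} ⋯ a_{i_k i_1} = a_{i_2 i_1} a_{i_3 i_2} ⋯ a_{i_1 i_k}. -/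
/-- A matrix is symmetrizable if there are nonzero rationals `d₁, …, dₙ` such that
`diag(d₁, …, dₙ) * A` is symmetric. -/
def IsSymmetrizable {n : ℕ} (A : Matrix (Fin n) (Fin n) ℤ) : Prop :=
  ∃ d : Fin n → ℚ, (∀ i, d i ≠ 0) ∧
    (Matrix.diagonal d * A.map (Int.cast : ℤ → ℚ)).IsSymm

section CycleAux
open SimpleGraph Walk

variable {ℓ : ℕ}

def Fwd (A : Matrix (Fin ℓ) (Fin ℓ) ℤ) {u v : Fin ℓ} (p : (gcmGraph A).Walk u v) : ℤ :=
  (p.darts.map fun d => A d.fst d.snd).prod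

def Bwd (A : Matrix (Fin ℓ) (Fin ℓ) ℤ) {u v : Fin ℓ} (p : (gcmGraph A).Walk u v) : ℤ :=
  (p.darts.map fun d => A d.snd d.fst).prod

variable {A : Matrix (Fin ℓ) (Fin ℓ) ℤ}

lemma Fwd_nil {v} : Fwd A (Walk.nil' v) = 1 := rfl

lemma Fwd_cons {u v w} (h : (gcmGraph A).Adj u v) (p : (gcmGraph A).Walk v w) :
    Fwd A (Walk.cons h p) = A u v * Fwd A p := by simp [Fwd]

lemma Bwd_cons {u v w} (h : (gcmGraph A).Adj u v) (p : (gcmGraph A).Walk v w) :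
    Bwd A (Walk.cons h p) = A v u * Bwd A p := by simp [Bwd]

lemma Fwd_append {u v w} (p : (gcmGraph A).Walk u v) (q : (gcmGraph A).Walk v w) :
    Fwd A (p.append q) = Fwd A p * Fwd A q := by simp [Fwd, Walk.darts_append]

lemma Bwd_append {u v w} (p : (gcmGraph A).Walk u v) (q : (gcmGraph A).Walk v w) :
    Bwd A (p.append q) = Bwd A p * Bwd A q := by simp [Bwd, Walk.darts_append]

lemma Fwd_copy {u v u' v'} (p : (gcmGraph A).Walk u v) (hu : u = u') (hv : v = v') :
    Fwd A (p.copy hu hv) = Fwd A p := by simp [Fwd]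

lemma Bwd_copy {u v u' v'} (p : (gcmGraph A).Walk u v) (hu : u = u') (hv : v = v') :
    Bwd A (p.copy hu hv) = Bwd A p := by simp [Bwd]

lemma Fwd_reverse {u v} (p : (gcmGraph A).Walk u v) : Fwd A p.reverse = Bwd A p := by
  simp [Fwd, Bwd, Walk.darts_reverse, List.map_reverse, List.prod_reverse, List.map_map,
    Function.comp_def]

lemma Bwd_reverse {u v} (p : (gcmGraph A).Walk u v) : Bwd A p.reverse = Fwd A p := by
  simp [Fwd, Bwd, Walk.darts_reverse, List.map_reverse, List.prod_reverse, List.map_map,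
    Function.comp_def]

lemma entries_ne_zero (hA : IsGCM A) {a b} (h : (gcmGraph A).Adj a b) :
    A a b ≠ 0 ∧ A b a ≠ 0 := by
  obtain ⟨-, h2⟩ := h
  constructor <;> intro h0
  · rcases h2 with h' | h'
    · exact h' h0
    · exact h' (hA.2.2 _ _ h0)
  · rcases h2 with h' | h'
    · exact h' (hA.2.2 _ _ h0)
    · exact h' h0

lemma Fwd_ne_zero (hA : IsGCM A) {u v} (p : (gcmGraph A).Walk u v) :
    Fwd A p ≠ 0 ∧ Bwd A p ≠ 0 := by
  induction p with
  | nil => simp [Fwd, Bwd]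
  | cons h p ih =>
    rw [Fwd_cons, Bwd_cons]
    exact ⟨mul_ne_zero (entries_ne_zero hA h).1 ih.1,
      mul_ne_zero (entries_ne_zero hA h).2 ih.2⟩

lemma Fwd_eq_prod {u v} (p : (gcmGraph A).Walk u v) :
    Fwd A p = ∏ i : Fin p.length, A (p.getVert i) (p.getVert (i + 1)) := by
  induction p with
  | nil => simp [Fwd]; exact (pow_zero _).symm
  | cons h p ih =>
    rw [Fwd_cons, ih, show (Walk.cons h p).length = p.length + 1 from rfl,
      Fin.prod_univ_succ]
    congr 1
    · simp

lemma Bwd_eq_prod {u v} (p : (gcmGraph A).Walk u v) :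
    Bwd A p = ∏ i : Fin p.length, A (p.getVert (i + 1)) (p.getVert i) := by
  induction p with
  | nil => simp [Bwd]; exact (pow_zero _).symm
  | cons h p ih =>
    rw [Bwd_cons, ih, show (Walk.cons h p).length = p.length + 1 from rfl,
      Fin.prod_univ_succ]
    congr 1
    · simp

end CycleAux

section CycleKey
open SimpleGraph Walk

variable {ℓ : ℕ} {A : Matrix (Fin ℓ) (Fin ℓ) ℤ}

lemma Fwd_eq_prod' {u v : Fin ℓ} {m : ℕ} (p : (gcmGraph A).Walk u v) (hm : p.length = m) :
    Fwd A p = ∏ i : Fin m, A (p.getVert i) (p.getVert (i + 1)) := by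
  subst hm; exact Fwd_eq_prod p

lemma Bwd_eq_prod' {u v : Fin ℓ} {m : ℕ} (p : (gcmGraph A).Walk u v) (hm : p.length = m) :
    Bwd A p = ∏ i : Fin m, A (p.getVert (i + 1)) (p.getVert i) := by
  subst hm; exact Bwd_eq_prod p

lemma closed_eq (hA : IsGCM A)
    (hyp : ∀ k : ℕ, k + 1 ≤ ℓ → ∀ f : Fin (k + 1) → Fin ℓ,
        (∀ s, f s ≠ f (s + 1)) →
        ∏ s, A (f s) (f (s + 1)) = ∏ s, A (f (s + 1)) (f s)) :
    ∀ (n : ℕ) (v : Fin ℓ) (c : (gcmGraph A).Walk v v), c.length = n → Fwd A c = Bwd A c := by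
  intro n
  induction n using Nat.strong_induction_on with
  | _ n ih =>
  intro v c hc
  rcases Nat.eq_zero_or_pos n with h0 | hpos
  · subst h0
    have hd : c.darts = [] := List.length_eq_zero_iff.mp (by rw [Walk.length_darts, hc])
    simp [Fwd, Bwd, hd]
  rcases le_or_gt n ℓ with hle | hgt
  · -- short closed walk: use the hypothesis directly
    obtain ⟨k, rfl⟩ := Nat.exists_eq_succ_of_ne_zero hpos.ne'
    have hwrap : ∀ s : Fin (k + 1),
        c.getVert ((s + 1 : Fin (k + 1)) : ℕ) = c.getVert (s.val + 1) := by
      intro s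
      by_cases hs : s = Fin.last k
      · rw [Fin.val_add_one, if_pos hs, Walk.getVert_zero, hs]
        show v = c.getVert (k + 1)
        rw [show k + 1 = c.length from hc.symm, Walk.getVert_length]
      · rw [Fin.val_add_one, if_neg hs]
    set f : Fin (k + 1) → Fin ℓ := fun s => c.getVert s with hf
    have hadj : ∀ s : Fin (k + 1), (gcmGraph A).Adj (f s) (f (s + 1)) := by
      intro s
      have : (gcmGraph A).Adj (c.getVert s) (c.getVert (s.val + 1)) :=
        c.adj_getVert_succ (by rw [hc]; exact s.isLt)
      simpa [hf, hwrap] using this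
    have hne : ∀ s, f s ≠ f (s + 1) := fun s => (hadj s).1
    have hcyc := hyp k hle f hne
    rw [Fwd_eq_prod' c hc, Bwd_eq_prod' c hc]
    calc (∏ i : Fin (k + 1), A (c.getVert i) (c.getVert (i + 1)))
        = ∏ s, A (f s) (f (s + 1)) :=
          Finset.prod_congr rfl fun s _ => by rw [show f (s+1) = c.getVert ((s+1 : Fin (k+1)) : ℕ) from rfl, hwrap]
      _ = ∏ s, A (f (s + 1)) (f s) := hcyc
      _ = ∏ i : Fin (k + 1), A (c.getVert (i + 1)) (c.getVert i) :=
          Finset.prod_congr rfl fun s _ => by rw [show f (s+1) = c.getVert ((s+1 : Fin (k+1)) : ℕ) from rfl, hwrap]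
  · -- long walk: find a repeated vertex and split
    have htl : c.support.tail.length = n := by
      rw [List.length_tail, Walk.length_support, hc]
      omega
    have hnodup : ¬ c.support.tail.Nodup := by
      intro hnd
      have := hnd.length_le_card
      rw [htl, Fintype.card_fin] at this
      omega
    obtain ⟨u, hu⟩ := List.exists_duplicate_iff_not_nodup.mpr hnodup
    have hcount : 2 ≤ c.support.tail.count u := List.duplicate_iff_two_le_count.mp hu
    have humem : u ∈ c.support := List.mem_of_mem_tail hu.mem
    have hdperm : ((c.rotate u humem).darts).Perm c.darts := (Walk.rotate_darts c u humem).perm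
    have hFwd : Fwd A (c.rotate u humem) = Fwd A c := (hdperm.map _).prod_eq
    have hBwd : Bwd A (c.rotate u humem) = Bwd A c := (hdperm.map _).prod_eq
    have hlen : (c.rotate u humem).length = n := by
      rw [← Walk.length_darts, hdperm.length_eq, Walk.length_darts, hc]
    have hcount' : 2 ≤ (c.rotate u humem).support.tail.count u := by
      rw [(Walk.support_rotate c u humem).perm.count_eq]; exact hcount
    have hnotnil : ¬ (c.rotate u humem).Nil := by
      rw [Walk.not_nil_iff_lt_length, hlen]; omega
    obtain ⟨x, hadj, p, hp⟩ := Walk.not_nil_iff.mp hnotnil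
    rw [hp] at hFwd hBwd hlen hcount'
    have hcp : 2 ≤ p.support.count u := by simpa using hcount'
    have hup : u ∈ p.support := by
      have : 0 < p.support.count u := by omega
      exact List.count_pos_iff.mp this
    have hspec : (p.takeUntil u hup).append (p.dropUntil u hup) = p := p.take_spec hup
    have hc1 : (p.takeUntil u hup).support.count u = 1 :=
      p.count_support_takeUntil_eq_one hup
    have hc2 : 1 ≤ (p.dropUntil u hup).support.tail.count u := by
      have h2 := hcp
      rw [← hspec, Walk.support_append, List.count_append, hc1] at h2
      omega
    have hq2len : 1 ≤ (p.dropUntil u hup).length := by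
      have h1 := List.count_le_length (a := u) (l := (p.dropUntil u hup).support.tail)
      have h2 : (p.dropUntil u hup).support.tail.length = (p.dropUntil u hup).length := by
        rw [List.length_tail, Walk.length_support]; omega
      omega
    have hsum : (p.takeUntil u hup).length + (p.dropUntil u hup).length = p.length := by
      have := congrArg Walk.length hspec
      rwa [Walk.length_append] at this
    have hplen : p.length + 1 = n := by simpa using hlen
    have hsplit : Walk.cons hadj p
        = (Walk.cons hadj (p.takeUntil u hup)).append (p.dropUntil u hup) := by
      rw [Walk.cons_append, hspec]
    have hF1 := ih ((p.takeUntil u hup).length + 1) (by omega) u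
      (Walk.cons hadj (p.takeUntil u hup)) rfl
    have hF2 := ih ((p.dropUntil u hup).length) (by omega) u (p.dropUntil u hup) rfl
    rw [← hFwd, ← hBwd, hsplit, Fwd_append, Bwd_append, hF1, hF2]

end CycleKey

open SimpleGraph Walk

/-- Proposition 2.2 of the paper: an `ℓ × ℓ` GCM `A` is
symmetrizable if and only if for every cyclic sequence of indices
`i₁, …, i_k` (`k ≤ ℓ`, consecutive indices distinct modulo `k`) one has
`a_{i₁ i₂} a_{i₂ i₃} ⋯ a_{i_k i₁} = a_{i₂ i₁} a_{i₃ i₂} ⋯ a_{i₁ i_k}`.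
The cyclic sequence of length `k + 1 ≤ ℓ` is encoded as `f : Fin (k+1) → Fin ℓ`,
with cyclic successor `s + 1` in `Fin (k+1)`. -/
theorem isSymmetrizable_iff_cycle_condition {ℓ : ℕ}
    {A : Matrix (Fin ℓ) (Fin ℓ) ℤ} (hA : IsGCM A) :
    IsSymmetrizable A ↔
      ∀ k : ℕ, k + 1 ≤ ℓ → ∀ f : Fin (k + 1) → Fin ℓ,
        (∀ s, f s ≠ f (s + 1)) →
        ∏ s, A (f s) (f (s + 1)) = ∏ s, A (f (s + 1)) (f s) := by
  constructor
  · rintro ⟨d, hd0, hsym⟩ k hk f hne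
    have hs : ∀ i j, d i * (A i j : ℚ) = d j * (A j i : ℚ) := by
      intro i j
      simpa [Matrix.diagonal_mul, Matrix.map_apply] using hsym.apply j i
    have hperm : (∏ s, d (f (s + 1))) = ∏ s, d (f s) := by
      simpa using Equiv.prod_comp (Equiv.addRight (1 : Fin (k + 1))) fun s => d (f s)
    have hmain : (∏ s, d (f s)) * ∏ s, (A (f s) (f (s + 1)) : ℚ)
        = (∏ s, d (f s)) * ∏ s, (A (f (s + 1)) (f s) : ℚ) := by
      calc (∏ s, d (f s)) * ∏ s, (A (f s) (f (s + 1)) : ℚ)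
          = ∏ s, (d (f s) * (A (f s) (f (s + 1)) : ℚ)) := Finset.prod_mul_distrib.symm
        _ = ∏ s, (d (f (s + 1)) * (A (f (s + 1)) (f s) : ℚ)) :=
            Finset.prod_congr rfl fun s _ => hs (f s) (f (s + 1))
        _ = (∏ s, d (f (s + 1))) * ∏ s, (A (f (s + 1)) (f s) : ℚ) := Finset.prod_mul_distrib
        _ = (∏ s, d (f s)) * ∏ s, (A (f (s + 1)) (f s) : ℚ) := by rw [hperm]
    have hdprod : (∏ s, d (f s)) ≠ 0 := Finset.prod_ne_zero_iff.mpr fun s _ => hd0 _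
    have hQ := mul_left_cancel₀ hdprod hmain
    exact_mod_cast hQ
  · intro hyp
    classical
    have key : ∀ (v : Fin ℓ) (c : (gcmGraph A).Walk v v), Fwd A c = Bwd A c :=
      fun v c => closed_eq hA hyp c.length v c rfl
    let r : Fin ℓ → Fin ℓ := fun i => ((gcmGraph A).connectedComponentMk i).out
    have hreach : ∀ i, (gcmGraph A).Reachable (r i) i := fun i =>
      SimpleGraph.ConnectedComponent.exact (Quot.out_eq _)
    let w : ∀ i, (gcmGraph A).Walk (r i) i := fun i => (hreach i).some
    have claim : ∀ a b, ((Fwd A (w a) : ℚ) / (Bwd A (w a) : ℚ)) * (A a b : ℚ)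
        = ((Fwd A (w b) : ℚ) / (Bwd A (w b) : ℚ)) * (A b a : ℚ) := by
      intro a b
      by_cases hab : a = b
      · subst hab; rfl
      by_cases h0 : A a b = 0
      · have h0' : A b a = 0 := hA.2.2 _ _ h0
        simp [h0, h0']
      have hadj : (gcmGraph A).Adj a b := ⟨hab, Or.inl h0⟩
      have hr : r b = r a :=
        congrArg Quot.out (SimpleGraph.ConnectedComponent.sound hadj.symm.reachable)
      have hc := key (r a) ((w a).append (Walk.cons hadj ((w b).reverse.copy rfl hr)))
      rw [Fwd_append, Bwd_append, Fwd_cons, Bwd_cons, Fwd_copy, Bwd_copy,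
        Fwd_reverse, Bwd_reverse] at hc
      have hcQ : (Fwd A (w a) : ℚ) * ((A a b : ℚ) * (Bwd A (w b) : ℚ))
          = (Bwd A (w a) : ℚ) * ((A b a : ℚ) * (Fwd A (w b) : ℚ)) := by exact_mod_cast hc
      have hBa : (Bwd A (w a) : ℚ) ≠ 0 := by exact_mod_cast (Fwd_ne_zero hA (w a)).2
      have hBb : (Bwd A (w b) : ℚ) ≠ 0 := by exact_mod_cast (Fwd_ne_zero hA (w b)).2
      field_simp
      linear_combination hcQ
    refine ⟨fun i => (Fwd A (w i) : ℚ) / (Bwd A (w i) : ℚ), fun i =>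
      div_ne_zero (by exact_mod_cast (Fwd_ne_zero hA (w i)).1)
        (by exact_mod_cast (Fwd_ne_zero hA (w i)).2), ?_⟩
    apply Matrix.IsSymm.ext
    intro i j
    simpa [Matrix.diagonal_mul, Matrix.map_apply] using claim j i
end

section
/- Let k ≥ 2. The minimum dimension of an N_k type generalized Cartan matrix is k: every generalized Cartan matrix of type N_{k,n} satisfies n ≥ k, and there exists a generalized Cartan matrix of type N_{k,k}. -/
/-- entries of the standard family: a path with a heavy first edge -/
def gcmEnt : ℕ → ℕ → ℤ := fun i j =>
  if i = j then 2
  else if i + 1 = j then (if i = 0 then -3 else -1)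
  else if j + 1 = i then (if j = 0 then -2 else -1)
  else 0

/-- `m × m` principal "interval" submatrix starting at offset `c`. -/
def gcmP (c m : ℕ) : Matrix (Fin m) (Fin m) ℤ := fun i j => gcmEnt (c + i) (c + j)

lemma gcmEnt_diag (a : ℕ) : gcmEnt a a = 2 := by simp [gcmEnt]

lemma gcmEnt_nonpos (a b : ℕ) (h : a ≠ b) : gcmEnt a b ≤ 0 := by
  unfold gcmEnt; split_ifs <;> omega

lemma gcmEnt_zero_symm (a b : ℕ) (h : gcmEnt a b = 0) : gcmEnt b a = 0 := by
  unfold gcmEnt at *; split_ifs at * <;> omega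

lemma gcmEnt_ne_zero_adj (a b : ℕ) (h : gcmEnt a b ≠ 0) (hab : a ≠ b) :
    a + 1 = b ∨ b + 1 = a := by
  unfold gcmEnt at h; split_ifs at h <;> omega

lemma gcmEnt_succ (a : ℕ) (ha : a ≠ 0) : gcmEnt a (a+1) = -1 := by
  unfold gcmEnt; split_ifs <;> omega

lemma gcmEnt_succ' (a : ℕ) (ha : a ≠ 0) : gcmEnt (a+1) a = -1 := by
  unfold gcmEnt; split_ifs <;> omega

lemma isGCM_gcmP (c m : ℕ) : IsGCM (gcmP c m) :=
  ⟨fun i => gcmEnt_diag _,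
   fun i j hij => gcmEnt_nonpos _ _ (by simpa [Fin.ext_iff] using hij),
   fun i j h => gcmEnt_zero_symm _ _ h⟩

lemma gcmP_adj_succ (c m : ℕ) (i j : Fin m) (hij : (i : ℕ) + 1 = j) :
    (gcmGraph (gcmP c m)).Adj i j := by
  refine ⟨by simp [Fin.ext_iff]; omega, Or.inl ?_⟩
  show gcmEnt (c + i) (c + j) ≠ 0
  have : c + (j : ℕ) = (c + i) + 1 := by omega
  rw [this]
  unfold gcmEnt; split_ifs <;> omega

lemma isIndecomposable_gcmP (c m : ℕ) (hm : 0 < m) : IsIndecomposable (gcmP c m) := by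
  have key : ∀ v : ℕ, ∀ h : v < m, (gcmGraph (gcmP c m)).Reachable ⟨0, hm⟩ ⟨v, h⟩ := by
    intro v
    induction v with
    | zero => intro h; exact SimpleGraph.Reachable.refl _
    | succ v ih =>
      intro h
      exact (ih (by omega)).trans (gcmP_adj_succ c m ⟨v, by omega⟩ ⟨v+1, h⟩ rfl).reachable
  have : Nonempty (Fin m) := ⟨⟨0, hm⟩⟩
  refine ⟨fun u v => ?_⟩
  have hu := key u.1 u.2
  have hv := key v.1 v.2
  exact (hu.symm.trans hv)

-- fix Connected: need Nonempty

/-- Connected principal submatrices of `gcmP` are intervals. -/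
lemma gcmP_submatrix_classify {c n m : ℕ} (f : Fin m → Fin n) (hf : StrictMono f)
    (hcon : IsIndecomposable ((gcmP c n).submatrix f f)) (hm : 0 < m) :
    (gcmP c n).submatrix f f = gcmP (c + (f ⟨0, hm⟩ : ℕ)) m := by
  have step : ∀ t t' : Fin m, (t : ℕ) + 1 = (t' : ℕ) → (f t' : ℕ) = (f t : ℕ) + 1 := by
    intro t t' htt
    by_contra hgap
    have hlt : f t < f t' := hf (by rw [Fin.lt_def]; omega)
    have hgap2 : (f t : ℕ) + 2 ≤ (f t' : ℕ) := by rw [Fin.lt_def] at hlt; omega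
    have inv : ∀ u v : Fin m, (gcmGraph ((gcmP c n).submatrix f f)).Adj u v →
        (f u : ℕ) ≤ (f t : ℕ) → (f v : ℕ) ≤ (f t : ℕ) := by
      rintro u v ⟨huv, hor⟩ hq
      have hfne : (c + (f u : ℕ)) ≠ (c + (f v : ℕ)) := by
        have h2 := hf.injective.ne huv
        rw [Ne, Fin.ext_iff] at h2; omega
      have hadj : (c + (f u : ℕ)) + 1 = c + (f v : ℕ) ∨
          (c + (f v : ℕ)) + 1 = c + (f u : ℕ) := by
        rcases hor with h | h
        · exact gcmEnt_ne_zero_adj _ _ h hfne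
        · exact (gcmEnt_ne_zero_adj _ _ h (Ne.symm hfne)).symm
      have hv1 : (f v : ℕ) < (f t' : ℕ) := by omega
      have hvt' : v < t' := by
        by_contra hle
        push_neg at hle
        have := hf.monotone hle
        rw [Fin.le_def] at this; omega
      have hvt : v ≤ t := by rw [Fin.le_def]; rw [Fin.lt_def] at hvt'; omega
      have := hf.monotone hvt; rw [Fin.le_def] at this; omega
    have hwalk : ∀ a b : Fin m, ((gcmGraph ((gcmP c n).submatrix f f)).Walk a b) →
        (f a : ℕ) ≤ (f t : ℕ) → (f b : ℕ) ≤ (f t : ℕ) := by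
      intro a b w
      induction w with
      | nil => exact id
      | cons h p ih => intro ha; exact ih (inv _ _ h ha)
    obtain ⟨w⟩ := hcon.preconnected ⟨0, hm⟩ t'
    have h0 : (f ⟨0, hm⟩ : ℕ) ≤ (f t : ℕ) := by
      have h1 : (⟨0, hm⟩ : Fin m) ≤ t := by simp [Fin.le_def]
      have := hf.monotone h1; rwa [Fin.le_def] at this
    have := hwalk _ _ w h0
    omega
  have hval : ∀ jv : ℕ, ∀ hj : jv < m, (f ⟨jv, hj⟩ : ℕ) = (f ⟨0, hm⟩ : ℕ) + jv := by
    intro jv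
    induction jv with
    | zero => intro hj; rfl
    | succ w ih =>
      intro hj
      have h1 := ih (by omega)
      have h2 := step ⟨w, by omega⟩ ⟨w + 1, hj⟩ rfl
      omega
  ext i j
  have hi := hval i.1 i.2
  have hj' := hval j.1 j.2
  simp only [Fin.eta] at hi hj'
  show gcmEnt (c + (f i : ℕ)) (c + (f j : ℕ)) = gcmEnt _ _
  rw [hi, hj']
  show _ = gcmEnt (c + (f ⟨0, hm⟩ : ℕ) + (i : ℕ)) (c + (f ⟨0, hm⟩ : ℕ) + (j : ℕ))
  congr 1 <;> omega

/-- Any `1 × 1` matrix with entry `2` is of finite type. -/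
lemma isFinType_one (B : Matrix (Fin 1) (Fin 1) ℤ) (h : B 0 0 = 2) : IsFinType B := by
  have hgcm : IsGCM B := by
    refine ⟨fun i => by rw [Subsingleton.elim i 0]; exact h, fun i j hij => ?_, fun i j hz => ?_⟩
    · exact absurd (Subsingleton.elim i j) hij
    · rw [Subsingleton.elim j 0, Subsingleton.elim i 0] at *; omega
  refine ⟨hgcm, ⟨fun u v => by rw [Subsingleton.elim u v]⟩, fun _ => 1, fun _ => one_pos, ?_⟩
  intro i
  rw [Subsingleton.elim i 0, Fin.sum_univ_one, h]
  norm_num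

lemma isFinType_gcmP_one (c : ℕ) : IsFinType (gcmP c 1) :=
  isFinType_one _ (gcmEnt_diag _)

lemma sum_if_nat {m : ℕ} (c : ℕ) (g : Fin m → ℚ) :
    ∑ j : Fin m, (if c = (j : ℕ) then g j else 0) = if h : c < m then g ⟨c, h⟩ else 0 := by
  split_ifs with h
  · have he : ∀ j : Fin m, (c = (j : ℕ)) ↔ ((⟨c, h⟩ : Fin m) = j) := by
      intro j; rw [Fin.ext_iff]
    simp only [he]
    simp
  · apply Finset.sum_eq_zero
    intro j _
    rw [if_neg]
    have := j.2
    omega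

/-- The interval matrices not containing index 0 are of finite type (type `A` path). -/
lemma isFinType_gcmP (c m : ℕ) (hc : 1 ≤ c) (hm : 1 ≤ m) : IsFinType (gcmP c m) := by
  refine ⟨isGCM_gcmP c m, isIndecomposable_gcmP c m (by omega), ?_⟩
  refine ⟨fun j => ((j : ℚ) + 1) * ((m : ℚ) - (j : ℚ)), fun j => ?_, ?_⟩
  · show 0 < ((j : ℚ) + 1) * ((m : ℚ) - (j : ℚ))
    have h1 : (j : ℚ) < (m : ℚ) := by exact_mod_cast j.2
    have h2 : (0:ℚ) ≤ (j : ℚ) := j.1.cast_nonneg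
    nlinarith
  · intro i
    have hent : ∀ j : Fin m, ((gcmP c m i j : ℚ)) * (((j : ℚ) + 1) * ((m : ℚ) - (j : ℚ))) =
        (if (i : ℕ) = (j : ℕ) then 2 * (((j : ℚ) + 1) * ((m : ℚ) - (j : ℚ))) else 0) +
        (if (i : ℕ) + 1 = (j : ℕ) then -(((j : ℚ) + 1) * ((m : ℚ) - (j : ℚ))) else 0) +
        (if (j : ℕ) + 1 = (i : ℕ) then -(((j : ℚ) + 1) * ((m : ℚ) - (j : ℚ))) else 0) := by
      intro j
      unfold gcmP gcmEnt
      split_ifs <;> push_cast <;> first | ring1 | (exfalso; omega)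
    rw [Finset.sum_congr rfl (fun j _ => hent j)]
    rw [Finset.sum_add_distrib, Finset.sum_add_distrib]
    rw [sum_if_nat (i : ℕ) _, sum_if_nat ((i : ℕ) + 1) _]
    have h3 : ∑ j : Fin m, (if (j : ℕ) + 1 = (i : ℕ) then
        -(((j : ℚ) + 1) * ((m : ℚ) - (j : ℚ))) else 0) =
        if h : (i : ℕ) - 1 < m ∧ 1 ≤ (i : ℕ) then
          -((((i : ℕ) - 1 : ℕ) : ℚ) + 1) * ((m : ℚ) - (((i : ℕ) - 1 : ℕ) : ℚ)) else 0 := by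
      rcases Nat.eq_zero_or_pos (i : ℕ) with hi | hi
      · rw [dif_neg (by omega)]
        apply Finset.sum_eq_zero
        intro j _; rw [if_neg (by omega)]
      · have he : ∀ j : Fin m, ((j : ℕ) + 1 = (i : ℕ)) ↔ ((i : ℕ) - 1 = (j : ℕ)) := by
          intro j; omega
        simp only [he]
        rw [sum_if_nat ((i : ℕ) - 1) _]
        rw [dif_pos (show (i:ℕ) - 1 < m by omega), dif_pos (⟨by omega, hi⟩ : (i:ℕ) - 1 < m ∧ 1 ≤ (i:ℕ))]
        ring
    rw [h3, dif_pos i.2]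
    have him : (i : ℕ) < m := i.2
    have hmq : ((i:ℕ) : ℚ) < (m : ℚ) := by exact_mod_cast him
    by_cases h4 : (i : ℕ) + 1 < m
    · rw [dif_pos h4]
      have h4q : ((i:ℕ) : ℚ) + 1 < (m : ℚ) := by exact_mod_cast h4
      by_cases h8 : (i : ℕ) - 1 < m ∧ 1 ≤ (i : ℕ)
      · rw [dif_pos h8]
        have h6 : ((((i:ℕ) - 1 : ℕ)) : ℚ) = ((i:ℕ) : ℚ) - 1 := by
          have := h8.2; push_cast [this]; ring
        rw [h6]
        simp only [Fin.val_mk]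
        push_cast
        nlinarith
      · rw [dif_neg h8]
        have hi0 : (i : ℕ) = 0 := by omega
        have hi0q : ((i:ℕ) : ℚ) = 0 := by exact_mod_cast hi0
        simp only [Fin.val_mk]
        push_cast
        rw [hi0q]
        nlinarith
    · rw [dif_neg h4]
      have hme : (i : ℕ) + 1 = m := by omega
      have hmeq : ((i:ℕ) : ℚ) + 1 = (m : ℚ) := by exact_mod_cast hme
      by_cases h8 : (i : ℕ) - 1 < m ∧ 1 ≤ (i : ℕ)
      · rw [dif_pos h8]
        have h6 : ((((i:ℕ) - 1 : ℕ)) : ℚ) = ((i:ℕ) : ℚ) - 1 := by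
          have := h8.2; push_cast [this]; ring
        rw [h6]
        simp only [Fin.val_mk]
        nlinarith
      · rw [dif_neg h8]
        have hi0 : (i : ℕ) = 0 := by omega
        have hi0q : ((i:ℕ) : ℚ) = 0 := by exact_mod_cast hi0
        simp only [Fin.val_mk]
        rw [hi0q]
        nlinarith

lemma gcmP2_00 : gcmP 0 2 0 0 = 2 := rfl
lemma gcmP2_01 : gcmP 0 2 0 1 = -3 := rfl
lemma gcmP2_10 : gcmP 0 2 1 0 = -2 := rfl
lemma gcmP2_11 : gcmP 0 2 1 1 = 2 := rfl

lemma isHypType_gcmP2 : IsHypType (gcmP 0 2) := by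
  refine ⟨isGCM_gcmP 0 2, isIndecomposable_gcmP 0 2 (by omega), ?_, ?_, ?_⟩
  · rintro ⟨-, -, u, hu, hs⟩
    have h0 := hs 0
    have h1 := hs 1
    rw [Fin.sum_univ_two, gcmP2_00, gcmP2_01] at h0
    rw [Fin.sum_univ_two, gcmP2_10, gcmP2_11] at h1
    push_cast at h0 h1
    linarith [hu 0, hu 1]
  · rintro ⟨-, -, u, hu, hs⟩
    have h0 := hs 0
    have h1 := hs 1
    rw [Fin.sum_univ_two, gcmP2_00, gcmP2_01] at h0
    rw [Fin.sum_univ_two, gcmP2_10, gcmP2_11] at h1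
    push_cast at h0 h1
    linarith [hu 0, hu 1]
  · rintro m B ⟨⟨f, hf, hB⟩, hm0, hm2⟩ hconn
    have hm1 : m = 1 := by omega
    subst hm1
    left
    apply isFinType_one
    rw [hB]
    exact gcmEnt_diag _

lemma gcmP_castSucc (j : ℕ) :
    (gcmP 0 (j + 1)).submatrix Fin.castSucc Fin.castSucc = gcmP 0 j := rfl

/-- The main construction: `gcmP 0 j` is of type `N_j` for all `j ≥ 2`. -/
lemma isNType_gcmP : ∀ j, 2 ≤ j → IsNType j (gcmP 0 j) := by
  intro j
  induction j using Nat.strong_induction_on with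
  | _ j ih =>
    intro hj
    match j, hj with
    | 2, _ => rw [IsNType]; exact isHypType_gcmP2
    | (k+3), _ =>
      rw [IsNType]
      refine ⟨isGCM_gcmP _ _, isIndecomposable_gcmP _ _ (by omega), ?_, ?_⟩
      · refine ⟨k + 2, gcmP 0 (k + 2),
          ⟨⟨Fin.castSucc, Fin.strictMono_castSucc, (gcmP_castSucc (k+2)).symm⟩,
            by omega, by omega⟩, ih (k + 2) (by omega) (by omega)⟩
      · rintro m B ⟨⟨f, hf, hB⟩, hm0, hmn⟩ hconn
        subst hB
        have hcls := gcmP_submatrix_classify f hf hconn hm0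
        rw [hcls]
        set d := (f ⟨0, hm0⟩ : ℕ) with hd
        rcases Nat.lt_or_ge m 2 with hm1 | hm1
        · have : m = 1 := by omega
          subst this
          exact ⟨0, by omega, by rw [IsNType]; exact isFinType_gcmP_one _⟩
        rcases Nat.eq_zero_or_pos d with hd0 | hd0
        · have h0d : 0 + d = 0 := by omega
          rw [h0d]
          exact ⟨m, hmn, ih m hmn hm1⟩
        · exact ⟨0, by omega, by rw [IsNType]; exact isFinType_gcmP _ m (by omega) (by omega)⟩

/-- lower bound -/
lemma isNType_lower : ∀ k n (A : Matrix (Fin n) (Fin n) ℤ), IsNType (k + 2) A → k + 2 ≤ n := by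
  intro k
  induction k with
  | zero =>
    intro n A hA
    rw [IsNType] at hA
    by_contra h
    push_neg at h
    interval_cases n
    · exact hA.2.1.nonempty.elim (fun x => x.elim0)
    · exact hA.2.2.1 (isFinType_one A (hA.1.1 0))
  | succ k ih =>
    intro n A hA
    rw [IsNType] at hA
    obtain ⟨-, -, ⟨m, B, ⟨hsub, hm0, hmn⟩, hB⟩, -⟩ := hA
    have := ih m B hB
    omega

/-- Proposition 4.2 of the paper: for `k ≥ 2`, the minimum
dimension of an `N_k` type GCM is `k`: every GCM of type `N_{k,n}` has `n ≥ k`,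
and there exists a GCM of type `N_{k,k}`. -/
theorem min_dim_of_isNType {k : ℕ} (hk : 2 ≤ k) :
    (∀ n, ∀ A : Matrix (Fin n) (Fin n) ℤ, IsGCM A → IsNType k A → k ≤ n) ∧
    (∃ A : Matrix (Fin k) (Fin k) ℤ, IsGCM A ∧ IsNType k A) := by
  obtain ⟨k', rfl⟩ : ∃ k', k = k' + 2 := ⟨k - 2, by omega⟩
  exact ⟨fun n A _ hA => isNType_lower k' n A hA,
    ⟨gcmP 0 (k' + 2), isGCM_gcmP _ _, isNType_gcmP _ (by omega)⟩⟩
end
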